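/- Let μ be a positive real number and n ≥ 1. Let X = J(μ𝐢,n) ⊕ J(μ𝐢,n) be the block-diagonal matrix in gl(2n,ℍ), where 𝐢 denotes the quaternion imaginary unit. Then X is strongly Ad_{GL(2n,ℍ)}-real; that is, there exists an invertible 2n×2n quaternionic matrix g with g² = I and g·X·g⁻¹ = -X. -/

import Mathlib

open Matrix

set_option maxHeartbeats 1000000

/-- The Jordan block `J(λ, m)`: an `m × m` matrix with `λ` on the diagonal,
`1` on the superdiagonal, and `0` elsewhere. -/
def jordanBlock {D : Type*} [Ring D] (lam : D) (m : ℕ) : Matrix (Fin m) (Fin m) D :=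
  Matrix.of fun i j => if i = j then lam else if (i : ℕ) + 1 = (j : ℕ) then 1 else 0

/-- The realification embedding `Ψ : M(n,ℂ) → M(2n,ℝ)`, replacing each complex entry
`z` by the 2×2 real block `((Re z, Im z), (-Im z, Re z))`. -/
def Psi {n : ℕ} (A : Matrix (Fin n) (Fin n) ℂ) :
    Matrix (Fin n × Fin 2) (Fin n × Fin 2) ℝ :=
  Matrix.of fun p q =>
    !![(A p.1 q.1).re, (A p.1 q.1).im; -(A p.1 q.1).im, (A p.1 q.1).re] p.2 q.2

/-- The standard embedding of `ℂ` into the real quaternions,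
sending `a + b i` to `a + b 𝐢`. -/
def toQuat (z : ℂ) : Quaternion ℝ := ⟨z.re, z.im, 0, 0⟩

/-- `X ∈ gl(n,D)` is `Ad_{GL(n,D)}`-real: there is an invertible matrix `g`
with `g X g⁻¹ = -X`. -/
def AdjReal {D : Type*} [Ring D] {ι : Type*} [Fintype ι] [DecidableEq ι]
    (X : Matrix ι ι D) : Prop :=
  ∃ g : (Matrix ι ι D)ˣ, g.val * X * (g⁻¹).val = -X

/-- `X ∈ gl(n,D)` is strongly `Ad_{GL(n,D)}`-real: there is an invertible matrix `g`
with `g² = I` and `g X g⁻¹ = -X`. -/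
def StronglyAdjReal {D : Type*} [Ring D] {ι : Type*} [Fintype ι] [DecidableEq ι]
    (X : Matrix ι ι D) : Prop :=
  ∃ g : (Matrix ι ι D)ˣ, g * g = 1 ∧ g.val * X * (g⁻¹).val = -X

/-- `A` is reversible in `GL(n,D)`: `A` is invertible and there is an invertible
matrix `g` with `g A g⁻¹ = A⁻¹`. -/
def Reversible {D : Type*} [Ring D] {ι : Type*} [Fintype ι] [DecidableEq ι]
    (A : Matrix ι ι D) : Prop :=
  ∃ a : (Matrix ι ι D)ˣ, a.val = A ∧ ∃ g : (Matrix ι ι D)ˣ, g * a * g⁻¹ = a⁻¹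

/-- `A` is strongly reversible in `GL(n,D)`: `A` is invertible and there is an
invertible matrix `g` with `g² = I` and `g A g⁻¹ = A⁻¹`. -/
def StronglyReversible {D : Type*} [Ring D] {ι : Type*} [Fintype ι] [DecidableEq ι]
    (A : Matrix ι ι D) : Prop :=
  ∃ a : (Matrix ι ι D)ˣ, a.val = A ∧ ∃ g : (Matrix ι ι D)ˣ, g * g = 1 ∧ g * a * g⁻¹ = a⁻¹

/-- For real `μ > 0` and `n ≥ 1`, the block-diagonal quaternionic matrix
`X = J(μ𝐢,n) ⊕ J(μ𝐢,n)` is strongly `Ad_{GL(2n,ℍ)}`-real. -/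
theorem stmt2 (μ : ℝ) (hμ : 0 < μ) (n : ℕ) (hn : 1 ≤ n) :
    StronglyAdjReal
      (fromBlocks (jordanBlock ((⟨0, μ, 0, 0⟩ : Quaternion ℝ)) n) 0 0
        (jordanBlock ((⟨0, μ, 0, 0⟩ : Quaternion ℝ)) n)) := by
  set jq : Quaternion ℝ := ⟨0, 0, 1, 0⟩ with hjq
  set mi : Quaternion ℝ := ⟨0, μ, 0, 0⟩ with hmi
  have hjj : jq * jq = -1 := by ext <;> simp only [Quaternion.re_mul, Quaternion.imI_mul, Quaternion.imJ_mul, Quaternion.imK_mul, Quaternion.re_neg, Quaternion.imI_neg, Quaternion.imJ_neg, Quaternion.imK_neg, Quaternion.re_one, Quaternion.imI_one, Quaternion.imJ_one, Quaternion.imK_one] <;> simp [hjq]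
  have hjij : jq * mi * jq = mi := by ext <;> simp only [Quaternion.re_mul, Quaternion.imI_mul, Quaternion.imJ_mul, Quaternion.imK_mul] <;> simp [hjq, hmi]
  set d : Fin n → Quaternion ℝ := fun i => (-1 : Quaternion ℝ) ^ (i : ℕ) * jq with hd
  set A : Matrix (Fin n) (Fin n) (Quaternion ℝ) := Matrix.diagonal d with hA
  have hcomm : ∀ (k : ℕ) (x : Quaternion ℝ), Commute ((-1 : Quaternion ℝ) ^ k) x :=
    fun k x => (Commute.neg_one_left x).pow_left k
  have hdd : ∀ i k : Fin n,
      d i * d k = (-1 : Quaternion ℝ) ^ ((i : ℕ) + (k : ℕ)) * (jq * jq) := by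
    intro i k
    calc ((-1 : Quaternion ℝ) ^ (i : ℕ) * jq) * ((-1 : Quaternion ℝ) ^ (k : ℕ) * jq)
        = ((-1 : Quaternion ℝ) ^ (i : ℕ) * (-1 : Quaternion ℝ) ^ (k : ℕ)) * (jq * jq) := by
          rw [Commute.mul_mul_mul_comm ((hcomm _ _).symm)]
      _ = _ := by rw [← pow_add]
  have hA2 : A * A = -1 := by
    rw [hA, Matrix.diagonal_mul_diagonal]
    have h : ∀ i : Fin n, d i * d i = -1 := by
      intro i
      rw [hdd, ← two_mul, pow_mul, neg_one_sq, one_pow, one_mul, hjj]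
    simp only [h]
    rw [← Matrix.diagonal_neg, Matrix.diagonal_one]
  set J := jordanBlock mi n with hJ
  have hAJA : A * J * A = J := by
    refine Matrix.ext fun i k => ?_
    rw [hA, Matrix.mul_diagonal, Matrix.diagonal_mul]
    have hJik : J i k = if i = k then mi else
        if (i : ℕ) + 1 = (k : ℕ) then 1 else 0 := rfl
    rw [hJik]
    have key : ∀ (m k : ℕ) (x : Quaternion ℝ),
        ((-1 : Quaternion ℝ) ^ m * jq) * x * ((-1 : Quaternion ℝ) ^ k * jq)
          = (-1 : Quaternion ℝ) ^ (m + k) * (jq * x * jq) := by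
      intro m k x
      rw [mul_assoc ((-1 : Quaternion ℝ) ^ m) jq x,
        Commute.mul_mul_mul_comm ((hcomm k (jq * x)).symm), ← pow_add]
    split_ifs with h1 h2
    · subst h1
      rw [hd, key, ← two_mul, pow_mul, neg_one_sq, one_pow, one_mul, hjij]
    · rw [mul_one, hdd, ← h2, ← add_assoc, ← two_mul, pow_succ, pow_mul, neg_one_sq,
        one_pow, one_mul, hjj, neg_one_mul, neg_neg]
    · rw [mul_zero, zero_mul]
  set g0 : Matrix (Fin n ⊕ Fin n) (Fin n ⊕ Fin n) (Quaternion ℝ) :=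
    fromBlocks 0 A (-A) 0 with hg0
  have hgg : g0 * g0 = 1 := by
    rw [hg0, Matrix.fromBlocks_multiply]
    simp only [Matrix.zero_mul, Matrix.mul_zero, Matrix.mul_neg, Matrix.neg_mul, hA2,
      neg_neg, neg_zero, add_zero, zero_add]
    exact Matrix.fromBlocks_one
  refine ⟨⟨g0, g0, hgg, hgg⟩, ?_, ?_⟩
  · exact Units.ext hgg
  · show g0 * fromBlocks J 0 0 J * g0 = -(fromBlocks J 0 0 J)
    rw [hg0, Matrix.fromBlocks_multiply, Matrix.fromBlocks_multiply]
    simp only [Matrix.zero_mul, Matrix.mul_zero, Matrix.mul_neg, Matrix.neg_mul, hAJA,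
      add_zero, zero_add, neg_zero, Matrix.fromBlocks_neg]
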